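/- Let A be the n×n incidence matrix of the closed in-neighborhood hypergraph of a tournament on n ≥ 1 vertices, so that A + Aᵀ equals J + I (all-ones matrix plus identity). If x ∈ ℝⁿ satisfies x ≥ 0 and Ax ≤ 1 (componentwise), then (Σᵢ xᵢ)² ≤ xᵀ(A+Aᵀ)x - xᵀx ≤ 2·Σᵢ xᵢ - xᵀx, hence Σᵢ xᵢ < 2. -/

import Mathlib

/-- Matrix form of the fractional transversal bound for tournaments. -/
theorem stmt5 (n : ℕ) (hn : 1 ≤ n) (A : Matrix (Fin n) (Fin n) ℝ)
    (hA01 : ∀ i j, A i j = 0 ∨ A i j = 1)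
    (hA : A + A.transpose = Matrix.of (fun _ _ => (1 : ℝ)) + 1)
    (x : Fin n → ℝ) (hx : ∀ i, 0 ≤ x i)
    (hAx : ∀ i, A.mulVec x i ≤ 1) :
    (∑ i, x i) ^ 2 ≤
        (∑ i, ∑ j, x i * (A + A.transpose) i j * x j) - ∑ i, (x i) ^ 2 ∧
    (∑ i, ∑ j, x i * (A + A.transpose) i j * x j) - ∑ i, (x i) ^ 2 ≤
        2 * (∑ i, x i) - ∑ i, (x i) ^ 2 ∧
    ∑ i, x i < 2 := by
  set S := ∑ i, x i with hS
  have key1 : (∑ i, ∑ j, x i * (A + A.transpose) i j * x j) = S ^ 2 + ∑ i, (x i) ^ 2 := by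
    rw [hA]
    have : ∀ i j : Fin n, x i * (Matrix.of (fun _ _ => (1 : ℝ)) + 1) i j * x j
        = x i * x j + (if i = j then x i * x j else 0) := by
      intro i j
      simp [Matrix.add_apply, Matrix.one_apply]
      split <;> ring
    simp only [this, Finset.sum_add_distrib, Finset.sum_ite_eq, Finset.mem_univ, if_true]
    rw [← Finset.sum_mul_sum]
    ring_nf
    rw [hS]; ring

  have key2 : (∑ i, ∑ j, x i * (A + A.transpose) i j * x j)
      = 2 * ∑ i, x i * A.mulVec x i := by
    simp only [Matrix.add_apply, Matrix.transpose_apply, Matrix.mulVec,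
      dotProduct, Finset.mul_sum]
    rw [show (∑ i, ∑ j, x i * (A i j + A j i) * x j)
        = (∑ i, ∑ j, x i * A i j * x j) + (∑ i, ∑ j, x i * A j i * x j) by
      rw [← Finset.sum_add_distrib]
      congr 1; ext i
      rw [← Finset.sum_add_distrib]
      congr 1; ext j; ring]
    rw [Finset.sum_comm (f := fun i j => x i * A j i * x j)]
    rw [← Finset.sum_add_distrib]
    congr 1; ext i
    rw [← Finset.sum_add_distrib]
    congr 1; ext j; ring
  have hbound : ∑ i, x i * A.mulVec x i ≤ S := by
    rw [hS]
    apply Finset.sum_le_sum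
    intro i _
    calc x i * A.mulVec x i ≤ x i * 1 := mul_le_mul_of_nonneg_left (hAx i) (hx i)
    _ = x i := mul_one _
  have hsq : (0:ℝ) ≤ ∑ i, (x i) ^ 2 := Finset.sum_nonneg fun i _ => sq_nonneg _
  have hS0 : 0 ≤ S := Finset.sum_nonneg fun i _ => hx i
  refine ⟨by rw [key1]; linarith, by rw [key2]; linarith, ?_⟩
  -- S^2 + ∑ x^2 ≤ 2 S
  have hmain : S ^ 2 + ∑ i, (x i) ^ 2 ≤ 2 * S := by
    rw [← key1, key2]; linarith
  rcases eq_or_lt_of_le hS0 with h | h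
  · linarith
  · have hx2 : 0 < ∑ i, (x i) ^ 2 := by
      by_contra hcon
      push_neg at hcon
      have hz : ∑ i, (x i) ^ 2 = 0 := le_antisymm hcon hsq
      have : ∀ i ∈ Finset.univ, (x i) ^ 2 = 0 :=
        (Finset.sum_eq_zero_iff_of_nonneg fun i _ => sq_nonneg _).mp hz
      have : S = 0 := Finset.sum_eq_zero fun i _ => by
        have := this i (Finset.mem_univ i); exact pow_eq_zero_iff (n := 2) (by norm_num) |>.mp this
      linarith
    nlinarith
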